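/- Let $A_0$ generate a bounded analytic semigroup $T_0$ on $E$ with $0 \in \rho(A_0)$, satisfying $\|A_0 T_0(t)\| \leq M/t$ for $t \in (0,t_{\max}]$; let $S$ be a $C_0$-semigroup on $F$ with generator $B$; let $D_0 : F \to E$ be bounded; and let $\mathbf{T}(\tau)$ be the Lie splitting operator with $V(\tau) = -\tau T_0(\tau)D_0 B S(\tau)$ and $\mathcal{T}(\tau)$ the exact semigroup. Then there exists $C \geq 0$ such that for all $(x,y) \in E \times \mathrm{dom}(B^2)$, $\tau > 0$ and integers $j \geq 1$ with $j\tau \leq t_{\max}$: $\|\mathbf{T}(\tau)^j (\mathcal{T}(\tau) - \mathbf{T}(\tau))(x,y)\| \leq C \tau^2 \|A_0 T_0(j\tau)\| (\|By\| + \|B^2 y\|)$. -/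

import Mathlib

open Set MeasureTheory intervalIntegral

/-- The Lie splitting propagator `𝐓(τ)(x,y) = (T₀(τ)x + V(τ)y + D₀S(τ)y - T₀(τ)D₀y, S(τ)y)`
with `V(τ) = -τ T₀(τ) D₀ B S(τ)`. -/
noncomputable def splitOp {E F : Type*} [NormedAddCommGroup E] [NormedSpace ℝ E]
    [NormedAddCommGroup F] [NormedSpace ℝ F]
    (T0 : ℝ → E →L[ℝ] E) (S : ℝ → F →L[ℝ] F) (D0 : F →L[ℝ] E) (B : F →ₗ[ℝ] F)
    (τ : ℝ) : E × F → E × F :=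
  fun p => (T0 τ p.1 + (-(τ • T0 τ (D0 (B (S τ p.2))))) + D0 (S τ p.2) - T0 τ (D0 p.2),
    S τ p.2)

set_option maxHeartbeats 1600000 in
/-- Weighted local error estimate for the Lie splitting: with
`A₀` generating the bounded analytic semigroup `T₀` (so `A₀T₀(t)` is bounded for `t > 0`,
represented by `AT t`, with `A₀⁻¹ (A₀T₀(t)) = T₀(t)`), there exists `C ≥ 0` such that for
all `(x,y) ∈ E × dom(B²)`, `τ > 0` and `j ≥ 1` with `jτ ≤ t_max`,
`‖𝐓(τ)ʲ (𝒯(τ) - 𝐓(τ))(x,y)‖ ≤ C τ² ‖A₀T₀(jτ)‖ (‖By‖ + ‖B²y‖)`, where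
`(𝒯(τ) - 𝐓(τ))(x,y) = (Q₀(τ)y - V(τ)y, 0)`. -/
theorem stmt11 {E F : Type*} [NormedAddCommGroup E] [NormedSpace ℝ E] [CompleteSpace E]
    [NormedAddCommGroup F] [NormedSpace ℝ F]
    (T0 : ℝ → E →L[ℝ] E) (S : ℝ → F →L[ℝ] F) (Ainv : E →L[ℝ] E)
    (AT : ℝ → E →L[ℝ] E) (D0 : F →L[ℝ] E)
    (B : F →ₗ[ℝ] F) (domB : Submodule ℝ F) (tmax M : ℝ) (htmax : 0 < tmax)
    (hT00 : T0 0 = 1)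
    (hT0sg : ∀ s t : ℝ, 0 ≤ s → 0 ≤ t → T0 (s + t) = (T0 s).comp (T0 t))
    (hS0 : S 0 = 1)
    (hSsg : ∀ s t : ℝ, 0 ≤ s → 0 ≤ t → S (s + t) = (S s).comp (S t))
    (hT0bdd : ∀ t ∈ Icc (0:ℝ) tmax, ‖T0 t‖ ≤ M)
    (hSbdd : ∀ t ∈ Icc (0:ℝ) tmax, ‖S t‖ ≤ M)
    -- parabolic smoothing: `‖t A₀ T₀(t)‖ ≤ M`
    (hATsmooth : ∀ t : ℝ, 0 < t → t ≤ tmax → ‖AT t‖ ≤ M / t)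
    -- `A₀⁻¹ A₀T₀(t) = T₀(t) = A₀T₀(t) A₀⁻¹`
    (hATA : ∀ t : ℝ, 0 < t → ∀ x : E, Ainv (AT t x) = T0 t x)
    (hAAT : ∀ t : ℝ, 0 < t → ∀ x : E, AT t (Ainv x) = T0 t x)
    (hAinvT0 : ∀ t : ℝ, 0 ≤ t → ∀ x : E, Ainv (T0 t x) = T0 t (Ainv x))
    (hSinv : ∀ t : ℝ, 0 ≤ t → ∀ y ∈ domB, S t y ∈ domB)
    (hcomm : ∀ t : ℝ, 0 ≤ t → ∀ y ∈ domB, B (S t y) = S t (B y))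
    -- quadrature lemma (Lemma 3.2), assumed
    (Cq : ℝ) (hCq : 0 ≤ Cq)
    (hquad : ∀ τ ∈ Icc (0:ℝ) tmax, ∀ s0 ∈ Icc (0:ℝ) τ, ∀ s1 ∈ Icc (0:ℝ) τ,
      ∀ y ∈ domB, B y ∈ domB →
      ‖(∫ s in (0:ℝ)..τ, T0 (τ - s) (Ainv (D0 (S s (B y)))))
          - τ • T0 (τ - s0) (Ainv (D0 (S s1 (B y))))‖
        ≤ Cq * τ ^ 2 * (‖B y‖ + ‖B (B y)‖)) :
    ∃ C ≥ 0, ∀ x : E, ∀ y ∈ domB, B y ∈ domB → ∀ τ : ℝ, 0 < τ → ∀ j : ℕ, 1 ≤ j →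
      (j : ℝ) * τ ≤ tmax →
      ‖((splitOp T0 S D0 B τ)^[j]
          ((-∫ ξ in (0:ℝ)..τ, T0 (τ - ξ) (D0 (S ξ (B y))))
              + τ • T0 τ (D0 (B (S τ y))), (0 : F))).1‖
        + ‖((splitOp T0 S D0 B τ)^[j]
          ((-∫ ξ in (0:ℝ)..τ, T0 (τ - ξ) (D0 (S ξ (B y))))
              + τ • T0 τ (D0 (B (S τ y))), (0 : F))).2‖
        ≤ C * τ ^ 2 * ‖AT ((j : ℝ) * τ)‖ * (‖B y‖ + ‖B (B y)‖) := by
  classical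
  have hM0 : (0:ℝ) ≤ M := le_trans (norm_nonneg (T0 0)) (hT0bdd 0 ⟨le_refl 0, htmax.le⟩)
  refine ⟨Cq * (2 + M), by positivity, ?_⟩
  intro x y hy hBy τ hτ j hj hjτ
  have hτ0 : (0:ℝ) ≤ τ := hτ.le
  have hj1 : (1:ℝ) ≤ (j:ℝ) := by exact_mod_cast hj
  have hjτpos : 0 < (j:ℝ) * τ := by nlinarith
  have hτtmax : τ ≤ tmax := by nlinarith
  have hΦ0 : (0:ℝ) ≤ ‖B y‖ + ‖B (B y)‖ := by positivity
  set Φ : ℝ := ‖B y‖ + ‖B (B y)‖ with hΦdef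
  set I : E := ∫ ξ in (0:ℝ)..τ, T0 (τ - ξ) (D0 (S ξ (B y))) with hI
  set z : E := (-I) + τ • T0 τ (D0 (B (S τ y))) with hz
  -- iterating the splitting operator on (w, 0) gives (T0 (n τ) w, 0)
  have hiter : ∀ n : ℕ, ∀ w : E,
      (splitOp T0 S D0 B τ)^[n] (w, (0:F)) = (T0 ((n:ℝ) * τ) w, (0:F)) := by
    intro n
    induction n with
    | zero =>
        intro w
        simp [hT00]
    | succ n ih =>
        intro w
        rw [Function.iterate_succ_apply', ih]
        have hstep : T0 (((n:ℕ) + 1 : ℕ) * τ : ℝ) = (T0 τ).comp (T0 ((n:ℝ) * τ)) := by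
          have : (((n:ℕ) + 1 : ℕ) : ℝ) * τ = τ + (n:ℝ) * τ := by push_cast; ring
          rw [this, hT0sg τ ((n:ℝ) * τ) hτ0 (by positivity)]
        simp only [splitOp, map_zero, smul_zero, neg_zero, add_zero, sub_zero, hstep,
          ContinuousLinearMap.comp_apply]
  rw [hiter j z]
  simp only [norm_zero, add_zero]
  have hBS : B (S τ y) = S τ (B y) := hcomm τ hτ0 y hy
  -- the central estimate: ‖Ainv z‖ ≤ Cq (2 + M) τ² Φ
  have hAinvz : ‖Ainv z‖ ≤ Cq * (2 + M) * τ ^ 2 * Φ := by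
    by_cases hf : IntervalIntegrable
        (fun s => T0 (τ - s) (D0 (S s (B y)))) volume 0 τ
    · -- integrable case: Ainv commutes with the integral; single quadrature application
      have hkey : Ainv I = ∫ s in (0:ℝ)..τ, T0 (τ - s) (Ainv (D0 (S s (B y)))) := by
        rw [hI, ← ContinuousLinearMap.intervalIntegral_comp_comm Ainv hf]
        refine intervalIntegral.integral_congr fun s hs => ?_
        rw [uIcc_of_le hτ0] at hs
        exact hAinvT0 (τ - s) (by linarith [hs.2]) _
      have hAz : Ainv z
          = -((∫ s in (0:ℝ)..τ, T0 (τ - s) (Ainv (D0 (S s (B y)))))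
              - τ • T0 (τ - 0) (Ainv (D0 (S τ (B y))))) := by
        rw [hz, map_add, map_neg, Ainv.map_smul, hkey, hAinvT0 τ hτ0, hBS, sub_zero]
        abel
      have hq := hquad τ ⟨hτ0, hτtmax⟩ 0 ⟨le_refl 0, hτ0⟩ τ ⟨hτ0, le_refl τ⟩ y hy hBy
      rw [hAz, norm_neg]
      calc ‖(∫ s in (0:ℝ)..τ, T0 (τ - s) (Ainv (D0 (S s (B y)))))
            - τ • T0 (τ - 0) (Ainv (D0 (S τ (B y))))‖ ≤ Cq * τ ^ 2 * Φ := hq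
        _ ≤ Cq * (2 + M) * τ ^ 2 * Φ := by
            nlinarith [mul_nonneg (mul_nonneg hCq (sq_nonneg τ)) hΦ0,
              mul_nonneg (mul_nonneg (mul_nonneg hCq hM0) (sq_nonneg τ)) hΦ0]
    · -- non-integrable case
      have hI0 : I = 0 := by rw [hI]; exact intervalIntegral.integral_undef hf
      have hAz : Ainv z = τ • T0 τ (Ainv (D0 (S τ (B y)))) := by
        rw [hz, hI0, map_add, map_neg, Ainv.map_smul, hAinvT0 τ hτ0, hBS, map_zero,
          neg_zero, zero_add]
      -- dyadic scales
      have h2k : ∀ k : ℕ, (0:ℝ) < 2 ^ k := fun k => by positivity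
      have hθpos : ∀ k : ℕ, 0 < τ / 2 ^ k := fun k => by positivity
      have hθmono : ∀ k : ℕ, τ / 2 ^ (k+1) ≤ τ / 2 ^ k := fun k =>
        div_le_div_of_nonneg_left hτ0 (h2k k) (by rw [pow_succ]; nlinarith [h2k k])
      have hθle : ∀ k : ℕ, τ / 2 ^ k ≤ τ := fun k =>
        div_le_self hτ0 (one_le_pow₀ (by norm_num))
      have ha0 : ∀ k : ℕ, (0:ℝ) ≤ τ - τ / 2 ^ k := fun k => by
        have := hθle k; linarith
      have hsum : ∀ k : ℕ, τ / 2 ^ (k + 1) + (τ - τ / 2 ^ k) = τ - τ / 2 ^ (k + 1) := by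
        intro k
        have h1 : ((2:ℝ)) ^ (k+1) = 2 * 2 ^ k := by ring
        field_simp [h1]
        ring
      -- some dyadic quadrature integrand must be non-integrable
      have hex : ∃ k : ℕ, ¬ IntervalIntegrable
          (fun s => T0 (τ / 2 ^ (k+1) - s) (Ainv (D0 (S s (B (S (τ - τ / 2 ^ k) y))))))
          volume 0 (τ / 2 ^ (k+1)) := by
        by_contra hall
        push_neg at hall
        apply hf
        -- each dyadic piece of f is integrable
        have hpiece : ∀ k : ℕ, IntervalIntegrable
            (fun s => T0 (τ - s) (D0 (S s (B y)))) volume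
            (τ - τ / 2 ^ k) (τ - τ / 2 ^ (k+1)) := by
          intro k
          have hGk := hall k
          have hAG : IntervalIntegrable
              (fun s => AT (τ / 2 ^ (k+1))
                (T0 (τ / 2 ^ (k+1) - s) (Ainv (D0 (S s (B (S (τ - τ / 2 ^ k) y)))))))
              volume 0 (τ / 2 ^ (k+1)) :=
            ⟨(AT (τ / 2 ^ (k+1))).integrable_comp hGk.1,
             (AT (τ / 2 ^ (k+1))).integrable_comp hGk.2⟩
          have hshift := hAG.comp_sub_right (τ - τ / 2 ^ k)
          rw [zero_add, hsum k] at hshift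
          refine hshift.congr ?_
          have hle : τ - τ / 2 ^ k ≤ τ - τ / 2 ^ (k+1) := by
            have := hθmono k; linarith
          rw [uIoc_of_le hle]
          intro s hs
          -- pointwise identity on the piece
          have hs1 : τ - τ / 2 ^ k < s := hs.1
          have hs2 : s ≤ τ - τ / 2 ^ (k+1) := hs.2
          have hsk0 : (0:ℝ) ≤ s - (τ - τ / 2 ^ k) := by linarith
          have hBSa : B (S (τ - τ / 2 ^ k) y) = S (τ - τ / 2 ^ k) (B y) :=
            hcomm _ (ha0 k) y hy
          have hScomp : S (s - (τ - τ / 2 ^ k)) (S (τ - τ / 2 ^ k) (B y)) = S s (B y) := by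
            have hrw : s - (τ - τ / 2 ^ k) + (τ - τ / 2 ^ k) = s := by ring
            rw [← hrw, hSsg _ _ hsk0 (ha0 k), ContinuousLinearMap.comp_apply]
            rw [hrw]
          have harg : τ / 2 ^ (k+1) - (s - (τ - τ / 2 ^ k))
              = (τ - τ / 2 ^ (k+1)) - s := by
            have := hsum k; linarith
          have hT0arg0 : (0:ℝ) ≤ (τ - τ / 2 ^ (k+1)) - s := by linarith
          calc AT (τ / 2 ^ (k+1))
                (T0 (τ / 2 ^ (k+1) - (s - (τ - τ / 2 ^ k)))
                  (Ainv (D0 (S (s - (τ - τ / 2 ^ k)) (B (S (τ - τ / 2 ^ k) y))))))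
              = AT (τ / 2 ^ (k+1)) (T0 ((τ - τ / 2 ^ (k+1)) - s)
                  (Ainv (D0 (S s (B y))))) := by rw [harg, hBSa, hScomp]
            _ = AT (τ / 2 ^ (k+1))
                (Ainv (T0 ((τ - τ / 2 ^ (k+1)) - s) (D0 (S s (B y))))) := by
                rw [hAinvT0 _ hT0arg0]
            _ = T0 (τ / 2 ^ (k+1)) (T0 ((τ - τ / 2 ^ (k+1)) - s) (D0 (S s (B y)))) :=
                hAAT _ (hθpos (k+1)) _
            _ = T0 (τ - s) (D0 (S s (B y))) := by
                rw [← ContinuousLinearMap.comp_apply, ← hT0sg _ _ (hθpos (k+1)).le hT0arg0]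
                congr 2
                have := hsum k; linarith
        -- assemble: f is integrable on (0, τ]
        rw [intervalIntegrable_iff_integrableOn_Ioc_of_le hτ0]
        have hpieceOn : ∀ k : ℕ, IntegrableOn
            (fun s => T0 (τ - s) (D0 (S s (B y))))
            (Ioc (τ - τ / 2 ^ k) (τ - τ / 2 ^ (k+1))) volume := fun k =>
          (intervalIntegrable_iff_integrableOn_Ioc_of_le (by
            have := hθmono k; linarith)).mp (hpiece k)
        have hUnion : Ioo (0:ℝ) τ
            = ⋃ k : ℕ, Ioc (τ - τ / 2 ^ k) (τ - τ / 2 ^ (k+1)) := by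
          ext s
          simp only [mem_Ioo, mem_iUnion, mem_Ioc]
          constructor
          · rintro ⟨hs0, hsτ⟩
            have hexn : ∃ n : ℕ, s ≤ τ - τ / 2 ^ (n+1) := by
              obtain ⟨n, hn⟩ := exists_pow_lt_of_lt_one
                (show (0:ℝ) < (τ - s)/τ from div_pos (by linarith) hτ)
                (show (1:ℝ)/2 < 1 by norm_num)
              refine ⟨n, ?_⟩
              have h2n : ((1:ℝ)/2) ^ n = 1 / 2 ^ n := by
                rw [div_pow, one_pow]
              rw [h2n] at hn
              have hτn : τ / 2 ^ n < τ - s := by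
                calc τ / 2 ^ n = (1 / 2 ^ n) * τ := by ring
                  _ < ((τ - s)/τ) * τ := mul_lt_mul_of_pos_right hn hτ
                  _ = τ - s := by field_simp
              have := hθmono n
              linarith
            refine ⟨Nat.find hexn, ?_, Nat.find_spec hexn⟩
            rcases Nat.eq_zero_or_pos (Nat.find hexn) with hk0 | hkpos
            · rw [hk0]
              simpa using hs0
            · obtain ⟨m, hm⟩ := Nat.exists_eq_succ_of_ne_zero hkpos.ne'
              have hnot := Nat.find_min hexn (show m < Nat.find hexn by omega)
              push_neg at hnot
              rw [hm]
              exact hnot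
          · rintro ⟨k, hk1, hk2⟩
            constructor
            · exact lt_of_le_of_lt (ha0 k) hk1
            · have := hθpos (k+1); linarith
        refine ⟨?_, ?_⟩
        · -- a.e. strong measurability on Ioc 0 τ
          have : AEStronglyMeasurable (fun s => T0 (τ - s) (D0 (S s (B y))))
              (volume.restrict (Ioo 0 τ)) := by
            rw [hUnion, aestronglyMeasurable_iUnion_iff]
            exact fun k => (hpieceOn k).aestronglyMeasurable
          rwa [Measure.restrict_congr_set Ioo_ae_eq_Ioc] at this
        · -- finite integral from boundedness
          have hfin : IsFiniteMeasure (volume.restrict (Ioc (0:ℝ) τ)) := by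
            constructor
            rw [Measure.restrict_apply_univ]
            simp [Real.volume_Ioc]
          exact HasFiniteIntegral.of_bounded (C := M * (‖D0‖ * (M * ‖B y‖)))
            ((ae_restrict_iff' (measurableSet_Ioc (α := ℝ))).mpr (ae_of_all _ fun s hs => by
              have hs1 : 0 < s := hs.1
              have hs2 : s ≤ τ := hs.2
              calc ‖T0 (τ - s) (D0 (S s (B y)))‖
                  ≤ ‖T0 (τ - s)‖ * ‖D0 (S s (B y))‖ :=
                    ContinuousLinearMap.le_opNorm _ _
                _ ≤ ‖T0 (τ - s)‖ * (‖D0‖ * ‖S s (B y)‖) := by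
                    apply mul_le_mul_of_nonneg_left (ContinuousLinearMap.le_opNorm _ _)
                      (norm_nonneg _)
                _ ≤ ‖T0 (τ - s)‖ * (‖D0‖ * (‖S s‖ * ‖B y‖)) := by
                    apply mul_le_mul_of_nonneg_left _ (norm_nonneg _)
                    apply mul_le_mul_of_nonneg_left (ContinuousLinearMap.le_opNorm _ _)
                      (norm_nonneg _)
                _ ≤ M * (‖D0‖ * (M * ‖B y‖)) := by
                    have hb1 : ‖T0 (τ - s)‖ ≤ M :=
                      hT0bdd _ ⟨by linarith, by linarith⟩
                    have hb2 : ‖S s‖ ≤ M := hSbdd _ ⟨hs1.le, by linarith⟩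
                    exact mul_le_mul hb1
                      (mul_le_mul_of_nonneg_left
                        (mul_le_mul_of_nonneg_right hb2 (norm_nonneg _))
                        (norm_nonneg _))
                      (by positivity) hM0))
      -- use the junk scale
      obtain ⟨k, hkbad⟩ := hex
      set θ : ℝ := τ / 2 ^ (k+1) with hθdef
      set a : ℝ := τ - τ / 2 ^ k with hadef
      have hθpos' : 0 < θ := by rw [hθdef]; positivity
      have hθτ : θ ≤ τ := by
        rw [hθdef]; exact div_le_self hτ0 (one_le_pow₀ (by norm_num))
      have ha0' : 0 ≤ a := by
        rw [hadef]
        have : τ / 2 ^ k ≤ τ := div_le_self hτ0 (one_le_pow₀ (by norm_num))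
        linarith
      have hatmax : a ≤ tmax := by
        rw [hadef]
        have := hθpos' ; have : 0 < τ / 2 ^ k := by positivity
        linarith
      have hsum' : θ + a = τ - θ := by
        rw [hθdef, hadef]
        have h1 : ((2:ℝ)) ^ (k+1) = 2 * 2 ^ k := by ring
        field_simp [h1]
        ring
      have hy' : S a y ∈ domB := hSinv a ha0' y hy
      have hBSa : B (S a y) = S a (B y) := hcomm a ha0' y hy
      have hBy' : B (S a y) ∈ domB := by rw [hBSa]; exact hSinv a ha0' _ hBy
      have hBBSa : B (B (S a y)) = S a (B (B y)) := by
        rw [hBSa]; exact hcomm a ha0' _ hBy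
      have hΦ' : ‖B (S a y)‖ + ‖B (B (S a y))‖ ≤ M * Φ := by
        rw [hBBSa, hBSa, hΦdef]
        have h1 : ‖S a (B y)‖ ≤ M * ‖B y‖ := by
          calc ‖S a (B y)‖ ≤ ‖S a‖ * ‖B y‖ := ContinuousLinearMap.le_opNorm _ _
            _ ≤ M * ‖B y‖ := by
                apply mul_le_mul_of_nonneg_right (hSbdd a ⟨ha0', hatmax⟩) (norm_nonneg _)
        have h2 : ‖S a (B (B y))‖ ≤ M * ‖B (B y)‖ := by
          calc ‖S a (B (B y))‖ ≤ ‖S a‖ * ‖B (B y)‖ := ContinuousLinearMap.le_opNorm _ _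
            _ ≤ M * ‖B (B y)‖ := by
                apply mul_le_mul_of_nonneg_right (hSbdd a ⟨ha0', hatmax⟩) (norm_nonneg _)
        linarith [mul_add M ‖B y‖ ‖B (B y)‖]
      -- quadrature at the junk scale: the quadrature point itself is O(θ²)
      have hq' := hquad θ ⟨hθpos'.le, le_trans hθτ hτtmax⟩ 0 ⟨le_refl 0, hθpos'.le⟩
        θ ⟨hθpos'.le, le_refl θ⟩ (S a y) hy' hBy'
      rw [intervalIntegral.integral_undef hkbad, zero_sub, norm_neg, sub_zero] at hq'
      -- rewrite the quadrature point
      have hSθa : S θ (B (S a y)) = S (τ - θ) (B y) := by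
        rw [hBSa, ← hsum', hSsg θ a hθpos'.le ha0', ContinuousLinearMap.comp_apply]
      rw [hSθa] at hq'
      have hq'' : ‖T0 θ (Ainv (D0 (S (τ - θ) (B y))))‖ ≤ Cq * θ * (M * Φ) := by
        have hnorm : ‖θ • T0 θ (Ainv (D0 (S (τ - θ) (B y))))‖
            = θ * ‖T0 θ (Ainv (D0 (S (τ - θ) (B y))))‖ := by
          rw [norm_smul, Real.norm_eq_abs, abs_of_pos hθpos']
        rw [hnorm] at hq'
        have step : θ * ‖T0 θ (Ainv (D0 (S (τ - θ) (B y))))‖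
            ≤ Cq * θ ^ 2 * (M * Φ) := by
          calc θ * ‖T0 θ (Ainv (D0 (S (τ - θ) (B y))))‖
              ≤ Cq * θ ^ 2 * (‖B (S a y)‖ + ‖B (B (S a y))‖) := hq'
            _ ≤ Cq * θ ^ 2 * (M * Φ) := by
                apply mul_le_mul_of_nonneg_left hΦ' (by positivity)
        nlinarith [norm_nonneg (T0 θ (Ainv (D0 (S (τ - θ) (B y)))))]
      -- two quadrature applications at the full horizon τ
      have h1 := hquad τ ⟨hτ0, hτtmax⟩ 0 ⟨le_refl 0, hτ0⟩ τ ⟨hτ0, le_refl τ⟩ y hy hBy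
      have hτθ0 : 0 ≤ τ - θ := by linarith
      have h2 := hquad τ ⟨hτ0, hτtmax⟩ (τ - θ) ⟨hτθ0, by linarith⟩
        (τ - θ) ⟨hτθ0, by linarith⟩ y hy hBy
      rw [sub_zero] at h1
      rw [show τ - (τ - θ) = θ by ring] at h2
      -- combine
      rw [hAz]
      have hdecomp : τ • T0 τ (Ainv (D0 (S τ (B y))))
          = (τ • T0 τ (Ainv (D0 (S τ (B y))))
              - (∫ s in (0:ℝ)..τ, T0 (τ - s) (Ainv (D0 (S s (B y))))))
            + ((∫ s in (0:ℝ)..τ, T0 (τ - s) (Ainv (D0 (S s (B y)))))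
              - τ • T0 θ (Ainv (D0 (S (τ - θ) (B y)))))
            + τ • T0 θ (Ainv (D0 (S (τ - θ) (B y)))) := by abel
      rw [hdecomp]
      have hPb : ‖τ • T0 θ (Ainv (D0 (S (τ - θ) (B y))))‖ ≤ Cq * M * τ ^ 2 * Φ := by
        rw [norm_smul, Real.norm_eq_abs, abs_of_pos hτ]
        calc τ * ‖T0 θ (Ainv (D0 (S (τ - θ) (B y))))‖
            ≤ τ * (Cq * θ * (M * Φ)) := mul_le_mul_of_nonneg_left hq'' hτ0
          _ = (Cq * (M * (Φ * τ))) * θ := by ring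
          _ ≤ (Cq * (M * (Φ * τ))) * τ :=
              mul_le_mul_of_nonneg_left hθτ
                (mul_nonneg hCq (mul_nonneg hM0 (mul_nonneg hΦ0 hτ0)))
          _ = Cq * M * τ ^ 2 * Φ := by ring
      calc ‖(τ • T0 τ (Ainv (D0 (S τ (B y))))
              - (∫ s in (0:ℝ)..τ, T0 (τ - s) (Ainv (D0 (S s (B y))))))
            + ((∫ s in (0:ℝ)..τ, T0 (τ - s) (Ainv (D0 (S s (B y)))))
              - τ • T0 θ (Ainv (D0 (S (τ - θ) (B y)))))
            + τ • T0 θ (Ainv (D0 (S (τ - θ) (B y))))‖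
          ≤ ‖τ • T0 τ (Ainv (D0 (S τ (B y))))
              - (∫ s in (0:ℝ)..τ, T0 (τ - s) (Ainv (D0 (S s (B y)))))‖
            + ‖(∫ s in (0:ℝ)..τ, T0 (τ - s) (Ainv (D0 (S s (B y)))))
              - τ • T0 θ (Ainv (D0 (S (τ - θ) (B y))))‖
            + ‖τ • T0 θ (Ainv (D0 (S (τ - θ) (B y))))‖ := norm_add₃_le
        _ ≤ Cq * τ ^ 2 * Φ + Cq * τ ^ 2 * Φ + Cq * M * τ ^ 2 * Φ := by
            have h1' : ‖τ • T0 τ (Ainv (D0 (S τ (B y))))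
                - (∫ s in (0:ℝ)..τ, T0 (τ - s) (Ainv (D0 (S s (B y)))))‖
                ≤ Cq * τ ^ 2 * Φ := by
              rw [norm_sub_rev]; exact h1
            exact add_le_add (add_le_add h1' h2) hPb
        _ = Cq * (2 + M) * τ ^ 2 * Φ := by ring
  -- conclude
  have hT0z : T0 ((j:ℝ) * τ) z = AT ((j:ℝ) * τ) (Ainv z) := (hAAT _ hjτpos z).symm
  calc ‖T0 ((j:ℝ) * τ) z‖ = ‖AT ((j:ℝ) * τ) (Ainv z)‖ := by rw [hT0z]
    _ ≤ ‖AT ((j:ℝ) * τ)‖ * ‖Ainv z‖ := ContinuousLinearMap.le_opNorm _ _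
    _ ≤ ‖AT ((j:ℝ) * τ)‖ * (Cq * (2 + M) * τ ^ 2 * Φ) :=
        mul_le_mul_of_nonneg_left hAinvz (norm_nonneg _)
    _ = Cq * (2 + M) * τ ^ 2 * ‖AT ((j:ℝ) * τ)‖ * Φ := by ring
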